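/- Let D=(V,E) be a finite multidigraph and let e be an arc of D. If e is a loop then π̂(D;x,y) = π̂(D_{-e};x,y); if e is not a loop then π̂(D;x,y) = π̂(D_{-e};x,y) + x·π̂(D_{/e};x,y) + x·(y−1)·π̂(D_{†e};x,y). -/
import Mathlib


open Classical

/-- A finite multidigraph: a finite set `V` of vertices (natural numbers),
a finite set `A` of arc identifiers, and a map `ends` assigning to each arc
identifier its (source, target) pair of vertices.  Parallel arcs are distinct
identifiers with the same endpoints; loops are arcs with equal endpoints. -/
structure MDigraph where
  V : Finset ℕ
  A : Finset ℕ
  ends : ℕ → ℕ × ℕ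

namespace MDigraph

/-- Every arc has both endpoints in the vertex set. -/
def WellFormed (D : MDigraph) : Prop :=
  ∀ a ∈ D.A, (D.ends a).1 ∈ D.V ∧ (D.ends a).2 ∈ D.V

/-- An arc is a loop if its source equals its target. -/
def IsLoop (D : MDigraph) (e : ℕ) : Prop := (D.ends e).1 = (D.ends e).2

/-- Arc deletion `D_{-e}`. -/
def delArc (D : MDigraph) (e : ℕ) : MDigraph := ⟨D.V, D.A.erase e, D.ends⟩

/-- Arc contraction `D_{/e}`.  For a non-loop arc `e = (u,v)`: merge `u` and `v`
into a single vertex (named `u`), removing exactly the arcs of the form `(u,x)`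
and `(y,v)`.  For a loop `e = (u,u)`: delete `u` together with all incident arcs. -/
noncomputable def contractArc (D : MDigraph) (e : ℕ) : MDigraph :=
  let u := (D.ends e).1
  let v := (D.ends e).2
  if u = v then
    ⟨D.V.erase u, D.A.filter (fun a => (D.ends a).1 ≠ u ∧ (D.ends a).2 ≠ u), D.ends⟩
  else
    ⟨D.V.erase v, D.A.filter (fun a => (D.ends a).1 ≠ u ∧ (D.ends a).2 ≠ v),
      fun a => ((if (D.ends a).1 = v then u else (D.ends a).1),
                (if (D.ends a).2 = v then u else (D.ends a).2))⟩

/-- Arc extraction `D_{†e}`: delete both endpoints of `e` and all arcs incident to them. -/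
noncomputable def extractArc (D : MDigraph) (e : ℕ) : MDigraph :=
  let u := (D.ends e).1
  let v := (D.ends e).2
  ⟨(D.V.erase u).erase v,
   D.A.filter (fun a =>
     (D.ends a).1 ≠ u ∧ (D.ends a).1 ≠ v ∧ (D.ends a).2 ≠ u ∧ (D.ends a).2 ≠ v),
   D.ends⟩

/-- Add one new arc with endpoints `p` (using a fresh arc identifier). -/
noncomputable def addArc (D : MDigraph) (p : ℕ × ℕ) : MDigraph :=
  ⟨D.V, insert (D.A.sup id + 1) D.A, Function.update D.ends (D.A.sup id + 1) p⟩

/-- Vertex deletion `D_{-v}`. -/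
noncomputable def delVertex (D : MDigraph) (v : ℕ) : MDigraph :=
  ⟨D.V.erase v, D.A.filter (fun a => (D.ends a).1 ≠ v ∧ (D.ends a).2 ≠ v), D.ends⟩

/-- Vertex contraction `D_{/v}`: delete `v`, and for every arc `(u,v)` into `v`
and every arc `(v,w)` out of `v` add a new arc `(u,w)`; thus the multiplicity of
a new arc `(u,w)` is the multiplicity of `(u,v)` times that of `(v,w)`. -/
noncomputable def contractVertex (D : MDigraph) (v : ℕ) : MDigraph :=
  ⟨D.V.erase v,
   ((D.A.filter (fun a => (D.ends a).1 ≠ v ∧ (D.ends a).2 ≠ v)).image (fun a => 2 * a)) ∪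
     (((D.A.filter (fun a => (D.ends a).2 = v)) ×ˢ (D.A.filter (fun a => (D.ends a).1 = v))).image
       (fun p => 2 * Nat.pair p.1 p.2 + 1)),
   fun n =>
     if n % 2 = 0 then D.ends (n / 2)
     else ((D.ends (Nat.unpair ((n - 1) / 2)).1).1, (D.ends (Nat.unpair ((n - 1) / 2)).2).2)⟩

/-- The arc-less digraph on `n` vertices. -/
def emptyD (n : ℕ) : MDigraph := ⟨Finset.range n, ∅, fun _ => (0, 0)⟩

/-- Disjoint union of two multidigraphs (vertices and arcs relabelled evenly/oddly). -/
noncomputable def disjUnion (D₁ D₂ : MDigraph) : MDigraph :=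
  ⟨(D₁.V.image (fun v => 2 * v)) ∪ (D₂.V.image (fun v => 2 * v + 1)),
   (D₁.A.image (fun a => 2 * a)) ∪ (D₂.A.image (fun a => 2 * a + 1)),
   fun n =>
     if n % 2 = 0 then (2 * (D₁.ends (n / 2)).1, 2 * (D₁.ends (n / 2)).2)
     else (2 * (D₂.ends (n / 2)).1 + 1, 2 * (D₂.ends (n / 2)).2 + 1)⟩

/-- Isomorphism of multidigraphs. -/
def Iso (D₁ D₂ : MDigraph) : Prop :=
  ∃ φ ψ : ℕ → ℕ, Set.BijOn φ ↑D₁.V ↑D₂.V ∧ Set.BijOn ψ ↑D₁.A ↑D₂.A ∧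
    ∀ a ∈ D₁.A, D₂.ends (ψ a) = (φ (D₁.ends a).1, φ (D₁.ends a).2)

/-- `C` is (the arc set of) a directed cycle of length `k` in `D`: `k` distinct arcs
forming a closed directed walk through `k` distinct vertices (`k ≥ 1`;
a loop is a directed cycle of length 1). -/
def IsCycle (D : MDigraph) (C : Finset ℕ) (k : ℕ) : Prop :=
  1 ≤ k ∧ ∃ v a : ℕ → ℕ,
    (∀ i j, i < k → j < k → v i = v j → i = j) ∧
    (∀ i j, i < k → j < k → a i = a j → i = j) ∧
    (∀ i, i < k → a i ∈ D.A ∧ D.ends (a i) = (v i, v ((i + 1) % k))) ∧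
    C = (Finset.range k).image a

/-- `P` is (the arc set of) a directed path of length `k` in `D`: `k` distinct arcs
forming a directed walk through `k+1` distinct vertices (`k ≥ 1`). -/
def IsPath (D : MDigraph) (P : Finset ℕ) (k : ℕ) : Prop :=
  1 ≤ k ∧ ∃ v a : ℕ → ℕ,
    (∀ i j, i ≤ k → j ≤ k → v i = v j → i = j) ∧
    (∀ i j, i < k → j < k → a i = a j → i = j) ∧
    (∀ i, i < k → a i ∈ D.A ∧ D.ends (a i) = (v i, v (i + 1))) ∧
    P = (Finset.range k).image a

/-- Number `c_k(D)` of directed cycles of length `k`. -/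
noncomputable def cycCount (D : MDigraph) (k : ℕ) : ℕ :=
  (D.A.powerset.filter (fun C => IsCycle D C k)).card

/-- Number `p_k(D)` of directed paths of length `k`. -/
noncomputable def pathCount (D : MDigraph) (k : ℕ) : ℕ :=
  (D.A.powerset.filter (fun P => IsPath D P k)).card

/-- The cycle polynomial `σ(D;x) = ∑_k c_k(D) x^k`. -/
noncomputable def cyclePoly (D : MDigraph) : Polynomial ℝ :=
  ∑ k ∈ Finset.range (D.A.card + 1), (cycCount D k : ℝ) • Polynomial.X ^ k

/-- The path polynomial `π(D;x) = ∑_k p_k(D) x^k`. -/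
noncomputable def pathPoly (D : MDigraph) : Polynomial ℝ :=
  ∑ k ∈ Finset.range (D.A.card + 1), (pathCount D k : ℝ) • Polynomial.X ^ k


/-- Out-degree of `v`: arcs with tail `v`, counted with multiplicity. -/
noncomputable def outDeg (D : MDigraph) (v : ℕ) : ℕ :=
  (D.A.filter (fun a => (D.ends a).1 = v)).card

/-- In-degree of `v`: arcs with head `v`, counted with multiplicity. -/
noncomputable def inDeg (D : MDigraph) (v : ℕ) : ℕ :=
  (D.A.filter (fun a => (D.ends a).2 = v)).card

/-- `P` is a directed path of length `k` in `D` beginning at `v0`. -/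
def IsPathFrom (D : MDigraph) (v0 : ℕ) (P : Finset ℕ) (k : ℕ) : Prop :=
  1 ≤ k ∧ ∃ v a : ℕ → ℕ, v 0 = v0 ∧
    (∀ i j, i ≤ k → j ≤ k → v i = v j → i = j) ∧
    (∀ i j, i < k → j < k → a i = a j → i = j) ∧
    (∀ i, i < k → a i ∈ D.A ∧ D.ends (a i) = (v i, v (i + 1))) ∧
    P = (Finset.range k).image a

/-- `P` is a directed path of length `k` in `D` ending at `v0`. -/
def IsPathTo (D : MDigraph) (v0 : ℕ) (P : Finset ℕ) (k : ℕ) : Prop :=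
  1 ≤ k ∧ ∃ v a : ℕ → ℕ, v k = v0 ∧
    (∀ i j, i ≤ k → j ≤ k → v i = v j → i = j) ∧
    (∀ i j, i < k → j < k → a i = a j → i = j) ∧
    (∀ i, i < k → a i ∈ D.A ∧ D.ends (a i) = (v i, v (i + 1))) ∧
    P = (Finset.range k).image a

/-- `p_k(D,v,+)`: number of directed paths of length `k` beginning at `v`. -/
noncomputable def pathFromCount (D : MDigraph) (v : ℕ) (k : ℕ) : ℕ :=
  (D.A.powerset.filter (fun P => IsPathFrom D v P k)).card

/-- `p_k(D,v,−)`: number of directed paths of length `k` ending at `v`. -/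
noncomputable def pathToCount (D : MDigraph) (v : ℕ) (k : ℕ) : ℕ :=
  (D.A.powerset.filter (fun P => IsPathTo D v P k)).card

/-- `π_{v+}(D;x) = ∑_k p_k(D,v,+) x^k`. -/
noncomputable def pathFromPoly (D : MDigraph) (v : ℕ) : Polynomial ℝ :=
  ∑ k ∈ Finset.range (D.A.card + 1), (pathFromCount D v k : ℝ) • Polynomial.X ^ k

/-- `π_{v-}(D;x) = ∑_k p_k(D,v,−) x^k`. -/
noncomputable def pathToPoly (D : MDigraph) (v : ℕ) : Polynomial ℝ :=
  ∑ k ∈ Finset.range (D.A.card + 1), (pathToCount D v k : ℝ) • Polynomial.X ^ k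

/-- In the spanning subgraph `D⟨F⟩`, every vertex has out-degree ≤ 1 and
in-degree ≤ 1; equivalently, every component of `D⟨F⟩` is a directed cycle,
a directed path, or an isolated vertex. -/
def DegOK (D : MDigraph) (F : Finset ℕ) : Prop :=
  ∀ w : ℕ, (F.filter (fun a => (D.ends a).1 = w)).card ≤ 1 ∧
    (F.filter (fun a => (D.ends a).2 = w)).card ≤ 1

/-- `kc(D⟨F⟩)`: the number of components of the spanning subgraph `D⟨F⟩` that are
directed cycles (for degree-constrained `F`, these are exactly the directed
cycles contained in `F`). -/
noncomputable def kcF (D : MDigraph) (F : Finset ℕ) : ℕ :=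
  (F.powerset.filter (fun C => ∃ k, IsCycle D C k)).card

/-- `kp(D⟨F⟩)`: the number of components of the spanning subgraph `D⟨F⟩` that are
directed paths with at least one arc (for degree-constrained `F`, counted by
their initial vertices: vertices that are the tail of an arc of `F` but the
head of no arc of `F`). -/
noncomputable def kpF (D : MDigraph) (F : Finset ℕ) : ℕ :=
  ((F.image (fun a => (D.ends a).1)).filter
    (fun w => (F.filter (fun a => (D.ends a).2 = w)).card = 0)).card

/-- The number of vertices covered by (incident to) the arcs of `F`. -/
noncomputable def coveredCard (D : MDigraph) (F : Finset ℕ) : ℕ :=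
  ((F.image (fun a => (D.ends a).1)) ∪ (F.image (fun a => (D.ends a).2))).card

/-- `k(D⟨F⟩)`: total number of connected components of the spanning subgraph
`D⟨F⟩` (isolated vertices included), for degree-constrained `F` in a
well-formed digraph. -/
noncomputable def kF (D : MDigraph) (F : Finset ℕ) : ℕ :=
  D.V.card - coveredCard D F + kcF D F + kpF D F

/-- `c(D⟨F⟩)`: number of covered components (components with at least one arc). -/
noncomputable def cF (D : MDigraph) (F : Finset ℕ) : ℕ := kcF D F + kpF D F

/-- `c₁(D⟨F⟩)`: number of loops in `F`. -/
noncomputable def loopCount (D : MDigraph) (F : Finset ℕ) : ℕ :=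
  (F.filter (fun a => (D.ends a).1 = (D.ends a).2)).card

/-- The bivariate cycle polynomial
`σ̂(D;x,y) = ∑_F x^{|F|} y^{kc(D⟨F⟩)}`, the sum being over all arc subsets `F`
such that every component of `D⟨F⟩` is a directed cycle or an isolated vertex. -/
noncomputable def biCycPoly (D : MDigraph) : MvPolynomial (Fin 2) ℝ :=
  ∑ F ∈ D.A.powerset.filter (fun F => DegOK D F ∧ kpF D F = 0),
    MvPolynomial.X 0 ^ F.card * MvPolynomial.X 1 ^ kcF D F

/-- The bivariate path polynomial
`π̂(D;x,y) = ∑_F x^{|F|} y^{kp(D⟨F⟩)}`, the sum being over all arc subsets `F`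
such that every component of `D⟨F⟩` is a directed path or an isolated vertex. -/
noncomputable def biPathPoly (D : MDigraph) : MvPolynomial (Fin 2) ℝ :=
  ∑ F ∈ D.A.powerset.filter (fun F => DegOK D F ∧ kcF D F = 0),
    MvPolynomial.X 0 ^ F.card * MvPolynomial.X 1 ^ kpF D F

/-- The trivariate cycle-path polynomial
`σ̂π(D;x,y,z) = ∑_F x^{|F|} y^{kc(D⟨F⟩)} z^{kp(D⟨F⟩)}`, the sum being over all
arc subsets `F` in which every vertex has in- and out-degree at most 1. -/
noncomputable def triPoly (D : MDigraph) : MvPolynomial (Fin 3) ℝ :=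
  ∑ F ∈ D.A.powerset.filter (fun F => DegOK D F),
    MvPolynomial.X 0 ^ F.card * MvPolynomial.X 1 ^ kcF D F * MvPolynomial.X 2 ^ kpF D F

/-- The geometric cover polynomial `C̃(D;x,y) = ∑_{i,j} c_{i,j}(D) x^i y^j`,
where `c_{i,j}(D)` is the number of ways of disjointly covering all vertices of
`D` with `i` directed paths and `j` directed cycles (isolated vertices counting
as paths of length 0): a cover is an arc subset `F` with all in- and out-degrees
at most 1, contributing `j = kc(D⟨F⟩)` cycles and
`i = kp(D⟨F⟩) + (number of uncovered vertices)` paths. -/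
noncomputable def geomCover (D : MDigraph) (x y : ℝ) : ℝ :=
  ∑ F ∈ D.A.powerset.filter (fun F => DegOK D F),
    x ^ (kpF D F + (D.V.card - coveredCard D F)) * y ^ kcF D F

/-- No vertex is incident both to an arc of `A` and to an arc of `B`. -/
def NoCommonVertex (D : MDigraph) (A B : Finset ℕ) : Prop :=
  ∀ a ∈ A, ∀ b ∈ B,
    (D.ends a).1 ≠ (D.ends b).1 ∧ (D.ends a).1 ≠ (D.ends b).2 ∧
    (D.ends a).2 ≠ (D.ends b).1 ∧ (D.ends a).2 ≠ (D.ends b).2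

/-- The explicit polynomial
`N(D;x,y,z) = ∑_{(A,B)} x^{k(D⟨A∪B⟩)−c(D⟨B⟩)−c₁(D⟨A⟩)} y^{|A|+|B|−c(D⟨B⟩)} z^{c(D⟨B⟩)}`,
summing over pairs of disjoint arc subsets `A, B` sharing no vertex such that
every component of `D⟨A∪B⟩` is a directed cycle, a directed path or an isolated
vertex. -/
noncomputable def NPoly (D : MDigraph) : MvPolynomial (Fin 3) ℝ :=
  ∑ p ∈ (D.A.powerset ×ˢ D.A.powerset).filter
      (fun p => Disjoint p.1 p.2 ∧ NoCommonVertex D p.1 p.2 ∧ DegOK D (p.1 ∪ p.2)),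
    MvPolynomial.X 0 ^ (kF D (p.1 ∪ p.2) - cF D p.2 - loopCount D p.1) *
      MvPolynomial.X 1 ^ (p.1.card + p.2.card - cF D p.2) *
      MvPolynomial.X 2 ^ cF D p.2

end MDigraph

/-- A finite undirected graph: a finite vertex set and a finite set of
unordered pairs as edges. -/
structure SGraph where
  V : Finset ℕ
  E : Finset (Sym2 ℕ)

namespace SGraph

/-- `G` is a simple graph: no loops, and all edge endpoints are vertices. -/
def Simple (G : SGraph) : Prop :=
  (∀ s ∈ G.E, ¬ s.IsDiag) ∧ ∀ s ∈ G.E, ∀ a ∈ s, a ∈ G.V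

/-- `P` is (the edge set of) an undirected path of length `k` in `G`. -/
def IsUPath (G : SGraph) (P : Finset (Sym2 ℕ)) (k : ℕ) : Prop :=
  1 ≤ k ∧ ∃ v : ℕ → ℕ,
    (∀ i j, i ≤ k → j ≤ k → v i = v j → i = j) ∧
    (∀ i, i < k → s(v i, v (i + 1)) ∈ G.E) ∧
    P = (Finset.range k).image (fun i => s(v i, v (i + 1)))

/-- `C` is (the edge set of) an undirected cycle of length `k ≥ 3` in `G`. -/
def IsUCycle (G : SGraph) (C : Finset (Sym2 ℕ)) (k : ℕ) : Prop :=
  3 ≤ k ∧ ∃ v : ℕ → ℕ,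
    (∀ i j, i < k → j < k → v i = v j → i = j) ∧
    (∀ i, i < k → s(v i, v ((i + 1) % k)) ∈ G.E) ∧
    C = (Finset.range k).image (fun i => s(v i, v ((i + 1) % k)))

/-- `p_k(G)`: number of undirected paths of length `k` in `G`. -/
noncomputable def uPathCount (G : SGraph) (k : ℕ) : ℕ :=
  (G.E.powerset.filter (fun P => IsUPath G P k)).card

/-- `c_k(G)`: number of undirected cycles of length `k` in `G`. -/
noncomputable def uCycCount (G : SGraph) (k : ℕ) : ℕ :=
  (G.E.powerset.filter (fun C => IsUCycle G C k)).card

/-- `π(G;x) = ∑_k p_k(G) x^k`. -/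
noncomputable def uPathPoly (G : SGraph) : Polynomial ℝ :=
  ∑ k ∈ Finset.range (G.E.card + 1), (uPathCount G k : ℝ) • Polynomial.X ^ k

/-- `σ(G;x) = ∑_k c_k(G) x^k`. -/
noncomputable def uCycPoly (G : SGraph) : Polynomial ℝ :=
  ∑ k ∈ Finset.range (G.E.card + 1), (uCycCount G k : ℝ) • Polynomial.X ^ k

/-- The digraph `D(G)` obtained from `G` by replacing each edge `{u,v}` by the
two oppositely oriented arcs `(u,v)` and `(v,u)`. -/
noncomputable def toDigraph (G : SGraph) : MDigraph :=
  ⟨G.V, ((G.V ×ˢ G.V).filter (fun p => s(p.1, p.2) ∈ G.E)).image (fun p => Nat.pair p.1 p.2),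
   Nat.unpair⟩

end SGraph
namespace MDigraph

section Aux

variable {D D₁ D₂ : MDigraph} {F C : Finset ℕ}

lemma kpF_congr (h : ∀ a ∈ F, D₁.ends a = D₂.ends a) : kpF D₁ F = kpF D₂ F := by
  unfold kpF
  have h1 : F.image (fun a => (D₁.ends a).1) = F.image (fun a => (D₂.ends a).1) :=
    Finset.image_congr (fun a ha => by rw [h a ha])
  have h2 : ∀ w, F.filter (fun a => (D₁.ends a).2 = w) = F.filter (fun a => (D₂.ends a).2 = w) :=
    fun w => Finset.filter_congr (fun a ha => by rw [h a ha])
  rw [h1]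
  congr 1
  exact Finset.filter_congr (fun w _ => by rw [h2 w])

lemma DegOK_congr (h : ∀ a ∈ F, D₁.ends a = D₂.ends a) : DegOK D₁ F ↔ DegOK D₂ F := by
  have h1 : ∀ w, F.filter (fun a => (D₁.ends a).1 = w) = F.filter (fun a => (D₂.ends a).1 = w) :=
    fun w => Finset.filter_congr (fun a ha => by rw [h a ha])
  have h2 : ∀ w, F.filter (fun a => (D₁.ends a).2 = w) = F.filter (fun a => (D₂.ends a).2 = w) :=
    fun w => Finset.filter_congr (fun a ha => by rw [h a ha])
  unfold DegOK
  constructor <;> intro hd w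
  · rw [← h1 w, ← h2 w]; exact hd w
  · rw [h1 w, h2 w]; exact hd w

lemma IsCycle_congr {k : ℕ} (h : ∀ a ∈ F, D₁.ends a = D₂.ends a) (hF2 : F ⊆ D₂.A)
    (hC : C ⊆ F) (hc : IsCycle D₁ C k) : IsCycle D₂ C k := by
  obtain ⟨hk, v, a, hv, ha, harc, hCeq⟩ := hc
  refine ⟨hk, v, a, hv, ha, fun i hi => ?_, hCeq⟩
  have hmem : a i ∈ F := hC (hCeq ▸ Finset.mem_image.2 ⟨i, Finset.mem_range.2 hi, rfl⟩)
  exact ⟨hF2 hmem, (h _ hmem) ▸ (harc i hi).2⟩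

lemma kcF_congr (h : ∀ a ∈ F, D₁.ends a = D₂.ends a) (h1 : F ⊆ D₁.A) (h2 : F ⊆ D₂.A) :
    kcF D₁ F = kcF D₂ F := by
  unfold kcF
  congr 1
  apply Finset.filter_congr
  intro C hC
  rw [Finset.mem_powerset] at hC
  constructor <;> rintro ⟨k, hk⟩
  · exact ⟨k, IsCycle_congr h h2 hC hk⟩
  · exact ⟨k, IsCycle_congr (fun a ha => (h a ha).symm) h1 hC hk⟩

lemma kcF_ne_zero {k : ℕ} (hC : C ⊆ F) (h : IsCycle D C k) : kcF D F ≠ 0 := by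
  unfold kcF
  simp only [ne_eq, Finset.card_eq_zero]
  intro hempty
  have hmem : C ∈ F.powerset.filter (fun C => ∃ k, IsCycle D C k) :=
    Finset.mem_filter.2 ⟨Finset.mem_powerset.2 hC, k, h⟩
  rw [hempty] at hmem
  exact absurd hmem (Finset.notMem_empty C)

lemma DegOK.tail_inj (h : DegOK D F) {a b : ℕ} (ha : a ∈ F) (hb : b ∈ F)
    (heq : (D.ends a).1 = (D.ends b).1) : a = b := by
  have hc := (h (D.ends a).1).1
  exact Finset.card_le_one.1 hc a (Finset.mem_filter.2 ⟨ha, rfl⟩)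
    b (Finset.mem_filter.2 ⟨hb, heq.symm⟩)

lemma DegOK.head_inj (h : DegOK D F) {a b : ℕ} (ha : a ∈ F) (hb : b ∈ F)
    (heq : (D.ends a).2 = (D.ends b).2) : a = b := by
  have hc := (h (D.ends a).2).2
  exact Finset.card_le_one.1 hc a (Finset.mem_filter.2 ⟨ha, rfl⟩)
    b (Finset.mem_filter.2 ⟨hb, heq.symm⟩)

lemma DegOK_of_inj
    (ht : ∀ a ∈ F, ∀ b ∈ F, (D.ends a).1 = (D.ends b).1 → a = b)
    (hh : ∀ a ∈ F, ∀ b ∈ F, (D.ends a).2 = (D.ends b).2 → a = b) : DegOK D F := by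
  intro w
  constructor
  · exact Finset.card_le_one.2 (fun a ha b hb => by
      rw [Finset.mem_filter] at ha hb
      exact ht a ha.1 b hb.1 (ha.2.trans hb.2.symm))
  · exact Finset.card_le_one.2 (fun a ha b hb => by
      rw [Finset.mem_filter] at ha hb
      exact hh a ha.1 b hb.1 (ha.2.trans hb.2.symm))

end Aux

end MDigraph
namespace MDigraph

section Rot

lemma shift_inj {k i i' j : ℕ} (hi : i < k) (hi' : i' < k)
    (h : (i + j) % k = (i' + j) % k) : i = i' := by
  have h2 : i % k = i' % k := Nat.ModEq.add_right_cancel' j h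
  rwa [Nat.mod_eq_of_lt hi, Nat.mod_eq_of_lt hi'] at h2

lemma rot_mod (k i j : ℕ) : ((i + j) % k + 1) % k = ((i + 1) % k + j) % k := by
  have a1 : ((i + j) % k + 1) % k = (i + j + 1) % k := by
    conv_rhs => rw [Nat.add_mod]
    rw [Nat.add_mod ((i + j) % k) 1, Nat.mod_mod_of_dvd _ dvd_rfl]
  have a2 : ((i + 1) % k + j) % k = (i + 1 + j) % k := by
    conv_rhs => rw [Nat.add_mod]
    rw [Nat.add_mod ((i + 1) % k) j, Nat.mod_mod_of_dvd _ dvd_rfl]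
  rw [a1, a2]
  ring_nf

lemma exists_shift {k j : ℕ} (hk : 0 < k) (hj : j ≤ k) {m : ℕ} (hm : m < k) :
    ∃ i, i < k ∧ (i + j) % k = m := by
  refine ⟨(m + (k - j)) % k, Nat.mod_lt _ (by omega), ?_⟩
  have a1 : ((m + (k - j)) % k + j) % k = (m + (k - j) + j) % k := by
    conv_rhs => rw [Nat.add_mod]
    rw [Nat.add_mod ((m + (k - j)) % k) j, Nat.mod_mod_of_dvd _ dvd_rfl]
  rw [a1]
  have : m + (k - j) + j = m + k := by omega
  rw [this, Nat.add_mod_right, Nat.mod_eq_of_lt hm]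

/-- Every vertex of a cycle is also the head of one of its arcs. -/
lemma exists_pred {k j : ℕ} (hj : j < k) : ∃ i, i < k ∧ (i + 1) % k = j :=
  exists_shift (by omega) (by omega) hj

lemma isCycle_rotate {D : MDigraph} {C : Finset ℕ} {k : ℕ} (h : IsCycle D C k)
    {c : ℕ} (hc : c ∈ C) :
    ∃ v a : ℕ → ℕ, a 0 = c ∧
      (∀ i j, i < k → j < k → v i = v j → i = j) ∧
      (∀ i j, i < k → j < k → a i = a j → i = j) ∧
      (∀ i, i < k → a i ∈ D.A ∧ D.ends (a i) = (v i, v ((i + 1) % k))) ∧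
      C = (Finset.range k).image a := by
  obtain ⟨hk, v, a, hv, ha, harc, hCeq⟩ := h
  have hkpos : 0 < k := hk
  obtain ⟨j, hj, hja⟩ : ∃ j, j < k ∧ a j = c := by
    subst hCeq
    simpa using hc
  refine ⟨fun i => v ((i + j) % k), fun i => a ((i + j) % k),
    by simp [Nat.mod_eq_of_lt hj, hja], ?_, ?_, ?_, ?_⟩
  · intro i i' hi hi' heq
    exact shift_inj hi hi' (hv _ _ (Nat.mod_lt _ hkpos) (Nat.mod_lt _ hkpos) heq)
  · intro i i' hi hi' heq
    exact shift_inj hi hi' (ha _ _ (Nat.mod_lt _ hkpos) (Nat.mod_lt _ hkpos) heq)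
  · intro i hi
    refine ⟨(harc _ (Nat.mod_lt _ hkpos)).1, ?_⟩
    rw [(harc _ (Nat.mod_lt _ hkpos)).2, rot_mod]
  · rw [hCeq]
    apply Finset.ext
    intro b
    simp only [Finset.mem_image, Finset.mem_range]
    constructor
    · rintro ⟨m, hm, rfl⟩
      obtain ⟨i, hi, hieq⟩ := exists_shift hkpos hj.le hm
      exact ⟨i, hi, by rw [hieq]⟩
    · rintro ⟨i, hi, rfl⟩
      exact ⟨(i + j) % k, Nat.mod_lt _ hkpos, rfl⟩

end Rot

end MDigraph
namespace MDigraph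

section Contract

variable {D : MDigraph} {e : ℕ} {F F' C : Finset ℕ}

lemma mem_contract_A (hne : (D.ends e).1 ≠ (D.ends e).2) {f : ℕ} :
    f ∈ (D.contractArc e).A ↔
      f ∈ D.A ∧ (D.ends f).1 ≠ (D.ends e).1 ∧ (D.ends f).2 ≠ (D.ends e).2 := by
  simp [contractArc, hne, Finset.mem_filter]

lemma contract_ends_eval (hne : (D.ends e).1 ≠ (D.ends e).2) (f : ℕ) :
    (D.contractArc e).ends f =
      ((if (D.ends f).1 = (D.ends e).2 then (D.ends e).1 else (D.ends f).1),
       (if (D.ends f).2 = (D.ends e).2 then (D.ends e).1 else (D.ends f).2)) := by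
  simp [contractArc, hne]

lemma erase_subset_contract (hne : (D.ends e).1 ≠ (D.ends e).2)
    (hF : F ⊆ D.A) (heF : e ∈ F) (hdeg : DegOK D F) :
    F.erase e ⊆ (D.contractArc e).A := by
  intro f hf
  obtain ⟨hfe, hfF⟩ := Finset.mem_erase.1 hf
  refine (mem_contract_A hne).2 ⟨hF hfF, fun h1 => ?_, fun h2 => ?_⟩
  · exact hfe (hdeg.tail_inj hfF heF h1)
  · exact hfe (hdeg.head_inj hfF heF h2)

lemma degOK_contract_erase (hne : (D.ends e).1 ≠ (D.ends e).2)
    (hF : F ⊆ D.A) (heF : e ∈ F) (hdeg : DegOK D F) :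
    DegOK (D.contractArc e) (F.erase e) := by
  have hsub := erase_subset_contract hne hF heF hdeg
  apply DegOK_of_inj
  · intro a ha b hb heq
    have hma := (mem_contract_A hne).1 (hsub ha)
    have hmb := (mem_contract_A hne).1 (hsub hb)
    rw [contract_ends_eval hne a, contract_ends_eval hne b] at heq
    simp only at heq
    have haF : a ∈ F := (Finset.mem_erase.1 ha).2
    have hbF : b ∈ F := (Finset.mem_erase.1 hb).2
    split_ifs at heq with h1 h2 h2
    · exact hdeg.tail_inj haF hbF (h1.trans h2.symm)
    · exact absurd heq.symm hmb.2.1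
    · exact absurd heq hma.2.1
    · exact hdeg.tail_inj haF hbF heq
  · intro a ha b hb heq
    have hma := (mem_contract_A hne).1 (hsub ha)
    have hmb := (mem_contract_A hne).1 (hsub hb)
    rw [contract_ends_eval hne a, contract_ends_eval hne b] at heq
    simp only at heq
    have haF : a ∈ F := (Finset.mem_erase.1 ha).2
    have hbF : b ∈ F := (Finset.mem_erase.1 hb).2
    split_ifs at heq with h1 h2 h2
    · exact hdeg.head_inj haF hbF (h1.trans h2.symm)
    · exact absurd h1 hma.2.2
    · exact absurd h2 hmb.2.2
    · exact hdeg.head_inj haF hbF heq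

lemma insert_subset_A (he : e ∈ D.A) (hF' : F' ⊆ (D.contractArc e).A)
    (hne : (D.ends e).1 ≠ (D.ends e).2) : insert e F' ⊆ D.A := by
  intro f hf
  rcases Finset.mem_insert.1 hf with rfl | hf'
  · exact he
  · exact ((mem_contract_A hne).1 (hF' hf')).1

lemma e_notMem_contract (hne : (D.ends e).1 ≠ (D.ends e).2) : e ∉ (D.contractArc e).A := by
  intro h
  exact ((mem_contract_A hne).1 h).2.1 rfl

lemma degOK_insert (hne : (D.ends e).1 ≠ (D.ends e).2)
    (hF' : F' ⊆ (D.contractArc e).A) (hdeg' : DegOK (D.contractArc e) F') :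
    DegOK D (insert e F') := by
  apply DegOK_of_inj
  · intro a ha b hb heq
    rcases Finset.mem_insert.1 ha with rfl | ha' <;> rcases Finset.mem_insert.1 hb with rfl | hb'
    · rfl
    · exact absurd heq.symm ((mem_contract_A hne).1 (hF' hb')).2.1
    · exact absurd heq ((mem_contract_A hne).1 (hF' ha')).2.1
    · refine hdeg'.tail_inj ha' hb' ?_
      rw [contract_ends_eval hne a, contract_ends_eval hne b]
      simp only [heq]
  · intro a ha b hb heq
    rcases Finset.mem_insert.1 ha with rfl | ha' <;> rcases Finset.mem_insert.1 hb with rfl | hb'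
    · rfl
    · exact absurd heq.symm ((mem_contract_A hne).1 (hF' hb')).2.2
    · exact absurd heq ((mem_contract_A hne).1 (hF' ha')).2.2
    · refine hdeg'.head_inj ha' hb' ?_
      rw [contract_ends_eval hne a, contract_ends_eval hne b]
      simp only [heq]

end Contract

end MDigraph
namespace MDigraph

section KC

variable {D : MDigraph} {e : ℕ} {F F' C : Finset ℕ}

lemma exists_cycle_of_ne (h : kcF D F ≠ 0) : ∃ C k, C ⊆ F ∧ IsCycle D C k := by
  unfold kcF at h
  obtain ⟨C, hC⟩ := Finset.card_pos.1 (Nat.pos_of_ne_zero h)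
  rw [Finset.mem_filter, Finset.mem_powerset] at hC
  obtain ⟨hsub, k, hk⟩ := hC
  exact ⟨C, k, hsub, hk⟩

lemma kcF_contract_erase (hne : (D.ends e).1 ≠ (D.ends e).2)
    (hF : F ⊆ D.A) (heF : e ∈ F) (hdeg : DegOK D F) (hkc : kcF D F = 0) :
    kcF (D.contractArc e) (F.erase e) = 0 := by
  have hsub := erase_subset_contract hne hF heF hdeg
  by_contra hnz
  obtain ⟨C, k, hCsub, hcyc⟩ := exists_cycle_of_ne hnz
  have hCF : C ⊆ F := hCsub.trans (Finset.erase_subset _ _)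
  have hk : 1 ≤ k := hcyc.1
  by_cases hcase : ∃ c ∈ C, ((D.contractArc e).ends c).1 = (D.ends e).1
  · -- some arc of C has contracted tail u : lift to a cycle of length k+1 in D through e
    obtain ⟨c, hc, hcu⟩ := hcase
    obtain ⟨v', a', ha0, hvinj, hainj, harc, hCeq⟩ := isCycle_rotate hcyc hc
    have haC : ∀ i, i < k → a' i ∈ C := by
      intro i hi
      rw [hCeq]
      exact Finset.mem_image.2 ⟨i, Finset.mem_range.2 hi, rfl⟩
    have hmem : ∀ i, i < k → a' i ∈ D.A ∧ (D.ends (a' i)).1 ≠ (D.ends e).1 ∧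
        (D.ends (a' i)).2 ≠ (D.ends e).2 :=
      fun i hi => (mem_contract_A hne).1 (hsub (hCsub (haC i hi)))
    have hET : ∀ i, i < k →
        (if (D.ends (a' i)).1 = (D.ends e).2 then (D.ends e).1 else (D.ends (a' i)).1) = v' i ∧
        (if (D.ends (a' i)).2 = (D.ends e).2 then (D.ends e).1 else (D.ends (a' i)).2)
          = v' ((i + 1) % k) := by
      intro i hi
      have h2 := (harc i hi).2
      rw [contract_ends_eval hne] at h2
      exact ⟨congrArg Prod.fst h2, congrArg Prod.snd h2⟩
    have hv0 : v' 0 = (D.ends e).1 := by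
      have := (harc 0 hk).2
      rw [ha0] at this
      rw [← hcu, this]
    have hvnu : ∀ i, i < k → i ≠ 0 → v' i ≠ (D.ends e).1 := by
      intro i hi hi0 hvi
      exact hi0 (hvinj i 0 hi hk (hvi.trans hv0.symm))
    have hvnv : ∀ i, i < k → v' i ≠ (D.ends e).2 := by
      intro i hi hvi
      have := (hET i hi).1
      split_ifs at this with h1
      · exact hne (this.trans hvi)
      · exact h1 (this.trans hvi)
    have htail : ∀ i, i < k → i ≠ 0 → (D.ends (a' i)).1 = v' i := by
      intro i hi hi0
      have := (hET i hi).1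
      split_ifs at this with h1
      · exact absurd this.symm (hvnu i hi hi0)
      · exact this
    have htail0 : (D.ends (a' 0)).1 = (D.ends e).2 := by
      have := (hET 0 hk).1
      split_ifs at this with h1
      · exact h1
      · exact absurd (this.trans hv0) (hmem 0 hk).2.1
    have hhead : ∀ i, i < k → (D.ends (a' i)).2 = v' ((i + 1) % k) := by
      intro i hi
      have := (hET i hi).2
      split_ifs at this with h1
      · exact absurd h1 (hmem i hi).2.2
      · exact this
    -- the lifted cycle
    set Vn : ℕ → ℕ := fun i => if i = 0 then (D.ends e).1 else (D.ends (a' (i - 1))).1 with hVn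
    set An : ℕ → ℕ := fun i => if i = 0 then e else a' (i - 1) with hAn
    have hanotE : ∀ i, i < k → a' i ≠ e := by
      intro i hi hie
      exact (Finset.mem_erase.1 (hCsub (haC i hi))).1 (hie ▸ rfl)
    have hcyc2 : IsCycle D ((Finset.range (k + 1)).image An) (k + 1) := by
      refine ⟨by omega, Vn, An, ?_, ?_, ?_, rfl⟩
      · intro i j hi hj heq
        simp only [hVn] at heq
        split_ifs at heq with h1 h2 h2
        · omega
        · exact absurd heq.symm ((hmem (j-1) (by omega)).2.1)
        · exact absurd heq ((hmem (i-1) (by omega)).2.1)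
        · by_cases hi1 : i = 1 <;> by_cases hj1 : j = 1
          · omega
          · rw [hi1] at heq
            simp only [htail0] at heq
            exact absurd heq.symm (htail (j-1) (by omega) (by omega) ▸ hvnv (j-1) (by omega))
          · rw [hj1] at heq
            simp only [htail0] at heq
            exact absurd heq (htail (i-1) (by omega) (by omega) ▸ hvnv (i-1) (by omega))
          · rw [htail (i-1) (by omega) (by omega), htail (j-1) (by omega) (by omega)] at heq
            have := hvinj _ _ (by omega : i - 1 < k) (by omega : j - 1 < k) heq
            omega
      · intro i j hi hj heq
        simp only [hAn] at heq
        split_ifs at heq with h1 h2 h2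
        · omega
        · exact absurd heq.symm (hanotE (j-1) (by omega))
        · exact absurd heq (hanotE (i-1) (by omega))
        · have := hainj _ _ (by omega : i - 1 < k) (by omega : j - 1 < k) heq
          omega
      · intro i hi
        by_cases hi0 : i = 0
        · subst hi0
          refine ⟨by simpa [hAn] using hF heF, ?_⟩
          have h1 : (0 + 1) % (k + 1) = 1 := by
            rw [zero_add]; exact Nat.mod_eq_of_lt (by omega)
          rw [h1]
          simp only [hAn, hVn, if_pos rfl, if_neg (by omega : ¬ (1:ℕ) = 0)]
          rw [Prod.ext_iff]
          refine ⟨rfl, ?_⟩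
          have : (1 : ℕ) - 1 = 0 := rfl
          rw [this, htail0]
        · have hi1 : 1 ≤ i := by omega
          refine ⟨by simp only [hAn, if_neg hi0]; exact (hmem (i-1) (by omega)).1, ?_⟩
          have hh := hhead (i-1) (by omega)
          rw [Prod.ext_iff]
          constructor
          · simp only [hAn, hVn, if_neg hi0]
          · simp only [hAn, hVn, if_neg hi0]
            by_cases hik : i = k
            · have e1 : (i - 1 + 1) % k = 0 := by
                rw [Nat.sub_add_cancel hi1, hik, Nat.mod_self]
              have e2 : (i + 1) % (k + 1) = 0 := by rw [hik]; exact Nat.mod_self _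
              rw [e1] at hh
              rw [e2, if_pos rfl, hh, hv0]
            · have hik' : i < k := by omega
              have e1 : (i - 1 + 1) % k = i := by
                rw [Nat.sub_add_cancel hi1, Nat.mod_eq_of_lt hik']
              have e2 : (i + 1) % (k + 1) = i + 1 := Nat.mod_eq_of_lt (by omega)
              rw [e1] at hh
              rw [e2, if_neg (by omega : ¬ i + 1 = 0), Nat.add_sub_cancel, hh,
                htail i hik' hi0]
    apply absurd hkc
    apply kcF_ne_zero (C := (Finset.range (k + 1)).image An) ?_ hcyc2
    intro x hx
    obtain ⟨i, hi, rfl⟩ := Finset.mem_image.1 hx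
    rw [Finset.mem_range] at hi
    by_cases hi0 : i = 0
    · simpa [hAn, hi0] using heF
    · simp only [hAn, if_neg hi0]
      exact hCF (haC (i-1) (by omega))
  · -- no arc of C touches the contracted vertex : C is already a cycle in D
    push_neg at hcase
    obtain ⟨hk', w, b, hw, hb, hwb, hCeq⟩ := hcyc
    have hbC : ∀ i, i < k → b i ∈ C := by
      intro i hi
      rw [hCeq]
      exact Finset.mem_image.2 ⟨i, Finset.mem_range.2 hi, rfl⟩
    have hmem : ∀ i, i < k → b i ∈ D.A ∧ (D.ends (b i)).1 ≠ (D.ends e).1 ∧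
        (D.ends (b i)).2 ≠ (D.ends e).2 :=
      fun i hi => (mem_contract_A hne).1 (hsub (hCsub (hbC i hi)))
    have hwnu : ∀ i, i < k → w i ≠ (D.ends e).1 := by
      intro i hi
      have := (hwb i hi).2
      have h1 : ((D.contractArc e).ends (b i)).1 = w i := by rw [this]
      rw [← h1]
      exact hcase (b i) (hbC i hi)
    have hcyc2 : IsCycle D C k := by
      refine ⟨hk', w, b, hw, hb, ?_, hCeq⟩
      intro i hi
      refine ⟨(hmem i hi).1, ?_⟩
      have h2 := (hwb i hi).2
      rw [contract_ends_eval hne] at h2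
      have hT := congrArg Prod.fst h2
      have hH := congrArg Prod.snd h2
      simp only at hT hH
      split_ifs at hT with h1
      · exact (hwnu i hi hT.symm).elim
      · split_ifs at hH with h3
        · exact (hwnu _ (Nat.mod_lt _ (by omega)) hH.symm).elim
        · rw [Prod.ext_iff]
          exact ⟨hT, hH⟩
    exact absurd hkc (kcF_ne_zero hCF hcyc2)

end KC

end MDigraph
namespace MDigraph

section KCIns

variable {D : MDigraph} {e : ℕ} {F' C : Finset ℕ}

lemma kcF_insert (he : e ∈ D.A) (hne : (D.ends e).1 ≠ (D.ends e).2)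
    (hF' : F' ⊆ (D.contractArc e).A) (hkc' : kcF (D.contractArc e) F' = 0) :
    kcF D (insert e F') = 0 := by
  by_contra hnz
  obtain ⟨C, k, hCsub, hcyc⟩ := exists_cycle_of_ne hnz
  have hk : 1 ≤ k := hcyc.1
  by_cases heC : e ∈ C
  · -- the cycle goes through e : contract it to a cycle of length k-1
    obtain ⟨v', a', ha0, hvinj, hainj, harc, hCeq⟩ := isCycle_rotate hcyc heC
    have haC : ∀ i, i < k → a' i ∈ C := by
      intro i hi
      rw [hCeq]
      exact Finset.mem_image.2 ⟨i, Finset.mem_range.2 hi, rfl⟩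
    have haF' : ∀ i, i < k → i ≠ 0 → a' i ∈ F' := by
      intro i hi hi0
      have hne' : a' i ≠ e := by
        intro h
        exact hi0 (hainj i 0 hi hk (h.trans ha0.symm))
      rcases Finset.mem_insert.1 (hCsub (haC i hi)) with h | h
      · exact absurd h hne'
      · exact h
    have hk2 : 2 ≤ k := by
      by_contra hlt
      have hk1 : k = 1 := by omega
      have := (harc 0 hk).2
      rw [ha0, hk1] at this
      have h1 : (D.ends e).1 = v' 0 := congrArg Prod.fst this
      have h2 : (D.ends e).2 = v' ((0 + 1) % 1) := congrArg Prod.snd this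
      simp only [Nat.mod_self, zero_add] at h2
      exact hne (h1.trans h2.symm)
    have hv0 : v' 0 = (D.ends e).1 := by
      have := (harc 0 hk).2
      rw [ha0] at this
      exact (congrArg Prod.fst this).symm
    have hv1 : v' 1 = (D.ends e).2 := by
      have := (harc 0 hk).2
      rw [ha0] at this
      have h2 := (congrArg Prod.snd this).symm
      simpa [Nat.mod_eq_of_lt hk2] using h2
    have hmem : ∀ i, i < k → i ≠ 0 → a' i ∈ (D.contractArc e).A := fun i hi hi0 =>
      hF' (haF' i hi hi0)
    -- the contracted cycle
    set Wn : ℕ → ℕ := fun j => if j = 0 then (D.ends e).1 else v' (j + 1) with hWn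
    have hcyc2 : IsCycle (D.contractArc e) ((Finset.range (k - 1)).image (fun j => a' (j + 1)))
        (k - 1) := by
      refine ⟨by omega, Wn, fun j => a' (j + 1), ?_, ?_, ?_, rfl⟩
      · intro i j hi hj heq
        simp only [hWn] at heq
        split_ifs at heq with h1 h2 h2
        · omega
        · have := hvinj 0 (j + 1) hk (by omega) (hv0.trans heq)
          omega
        · have := hvinj (i + 1) 0 (by omega) hk (heq.trans hv0.symm)
          omega
        · have := hvinj (i + 1) (j + 1) (by omega) (by omega) heq
          omega
      · intro i j hi hj heq
        have := hainj (i + 1) (j + 1) (by omega) (by omega) heq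
        omega
      · intro j hj
        refine ⟨hmem (j + 1) (by omega) (by omega), ?_⟩
        have hDe := (harc (j + 1) (by omega)).2
        rw [contract_ends_eval hne, hDe]
        simp only
        rw [Prod.ext_iff]
        constructor
        · simp only [hWn]
          by_cases hj0 : j = 0
          · subst hj0
            rw [if_pos rfl, if_pos (by rw [zero_add, hv1])]
          · rw [if_neg hj0, if_neg ?_]
            intro h
            have := hvinj (j + 1) 1 (by omega) (by omega) (h.trans hv1.symm)
            omega
        · simp only [hWn]
          by_cases hjk : j = k - 2
          · have e1 : (j + 1 + 1) % k = 0 := by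
              rw [hjk]
              have : k - 2 + 1 + 1 = k := by omega
              rw [this, Nat.mod_self]
            have e2 : (j + 1) % (k - 1) = 0 := by
              rw [hjk]
              have : k - 2 + 1 = k - 1 := by omega
              rw [this, Nat.mod_self]
            rw [e1, e2, if_pos rfl, if_neg ?_, hv0]
            rw [hv0]
            exact hne
          · have e1 : (j + 1 + 1) % k = j + 2 := Nat.mod_eq_of_lt (by omega)
            have e2 : (j + 1) % (k - 1) = j + 1 := Nat.mod_eq_of_lt (by omega)
            rw [e1, e2, if_neg (by omega : ¬ j + 1 = 0), if_neg ?_]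
            intro h
            have := hvinj (j + 2) 1 (by omega) (by omega) (h.trans hv1.symm)
            omega
    apply absurd hkc'
    apply kcF_ne_zero (C := (Finset.range (k - 1)).image (fun j => a' (j + 1))) ?_ hcyc2
    intro x hx
    obtain ⟨j, hj, rfl⟩ := Finset.mem_image.1 hx
    rw [Finset.mem_range] at hj
    exact haF' (j + 1) (by omega) (by omega)
  · -- e ∉ C : C is a cycle avoiding the deleted arcs, so it lives in the contraction
    have hCF' : C ⊆ F' := fun x hx => by
      rcases Finset.mem_insert.1 (hCsub hx) with h | h
      · exact absurd (h ▸ hx) heC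
      · exact h
    obtain ⟨hk', w, b, hw, hb, hwb, hCeq⟩ := hcyc
    have hbC : ∀ i, i < k → b i ∈ C := by
      intro i hi
      rw [hCeq]
      exact Finset.mem_image.2 ⟨i, Finset.mem_range.2 hi, rfl⟩
    have hmem : ∀ i, i < k → b i ∈ (D.contractArc e).A := fun i hi => hF' (hCF' (hbC i hi))
    have hwnv : ∀ i, i < k → w i ≠ (D.ends e).2 := by
      intro i hi hwi
      obtain ⟨m, hm, hmi⟩ := exists_pred hi
      have h2 := (hwb m hm).2
      have hh : (D.ends (b m)).2 = w ((m + 1) % k) := by rw [h2]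
      rw [hmi, hwi] at hh
      exact ((mem_contract_A hne).1 (hmem m hm)).2.2 hh
    have hcyc2 : IsCycle (D.contractArc e) C k := by
      refine ⟨hk', w, b, hw, hb, ?_, hCeq⟩
      intro i hi
      refine ⟨hmem i hi, ?_⟩
      rw [contract_ends_eval hne, (hwb i hi).2]
      simp only
      rw [if_neg (hwnv i hi), if_neg (hwnv _ (Nat.mod_lt _ (by omega)))]
    exact absurd hkc' (kcF_ne_zero hCF' hcyc2)

end KCIns

end MDigraph
namespace MDigraph

section KP

variable {D : MDigraph} {e : ℕ} {F' : Finset ℕ}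

lemma mem_kpSet {D : MDigraph} {F : Finset ℕ} {w : ℕ} :
    w ∈ (F.image (fun a => (D.ends a).1)).filter
        (fun w => (F.filter (fun a => (D.ends a).2 = w)).card = 0) ↔
      (∃ a ∈ F, (D.ends a).1 = w) ∧ ∀ a ∈ F, (D.ends a).2 ≠ w := by
  simp [Finset.mem_filter, Finset.mem_image, Finset.card_eq_zero,
    Finset.filter_eq_empty_iff]

lemma kpF_eq_card {D : MDigraph} {F : Finset ℕ} :
    kpF D F = ((F.image (fun a => (D.ends a).1)).filter
        (fun w => (F.filter (fun a => (D.ends a).2 = w)).card = 0)).card := rfl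

lemma kp_insert_cov (hne : (D.ends e).1 ≠ (D.ends e).2)
    (hF' : F' ⊆ (D.contractArc e).A)
    (hcov : ∃ f ∈ F', (D.ends f).1 = (D.ends e).2 ∨ (D.ends f).2 = (D.ends e).1) :
    kpF D (insert e F') = kpF (D.contractArc e) F' := by
  have hfacts : ∀ f ∈ F', (D.ends f).1 ≠ (D.ends e).1 ∧ (D.ends f).2 ≠ (D.ends e).2 :=
    fun f hf => ((mem_contract_A hne).1 (hF' hf)).2
  rw [kpF_eq_card, kpF_eq_card]
  congr 1
  apply Finset.ext
  intro w
  rw [mem_kpSet, mem_kpSet]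
  constructor
  · rintro ⟨⟨a, ha, hta⟩, hheads⟩
    have hwv : w ≠ (D.ends e).2 := by
      intro hwv
      exact hheads e (Finset.mem_insert_self e F') (by rw [hwv])
    constructor
    · rcases Finset.mem_insert.1 ha with rfl | haF'
      · -- w = u ; use the covering arc
        obtain ⟨f, hf, hfc⟩ := hcov
        rcases hfc with hfc | hfc
        · refine ⟨f, hf, ?_⟩
          rw [contract_ends_eval hne]
          simp only [if_pos hfc]
          exact hta
        · exact absurd (hfc.trans hta) (hheads f (Finset.mem_insert_of_mem hf))
      · refine ⟨a, haF', ?_⟩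
        rw [contract_ends_eval hne]
        simp only
        rw [if_neg (show (D.ends a).1 ≠ (D.ends e).2 from fun h => hwv (hta.symm.trans h))]
        exact hta
    · intro f hf
      rw [contract_ends_eval hne]
      simp only
      rw [if_neg (hfacts f hf).2]
      exact hheads f (Finset.mem_insert_of_mem hf)
  · rintro ⟨⟨f, hf, htf⟩, hheads⟩
    rw [contract_ends_eval hne] at htf
    simp only at htf
    have hwv : w ≠ (D.ends e).2 := by
      split_ifs at htf with h1
      · rw [← htf]; exact hne
      · rw [← htf]; exact h1
    constructor
    · split_ifs at htf with h1
      · exact ⟨e, Finset.mem_insert_self e F', htf⟩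
      · exact ⟨f, Finset.mem_insert_of_mem hf, htf⟩
    · intro a ha
      rcases Finset.mem_insert.1 ha with rfl | haF'
      · exact fun h => hwv h.symm
      · have := hheads a haF'
        rw [contract_ends_eval hne] at this
        simp only at this
        rwa [if_neg (hfacts a haF').2] at this

lemma kp_insert_uncov (hne : (D.ends e).1 ≠ (D.ends e).2)
    (hF' : F' ⊆ (D.contractArc e).A)
    (hcov : ¬ ∃ f ∈ F', (D.ends f).1 = (D.ends e).2 ∨ (D.ends f).2 = (D.ends e).1) :
    kpF D (insert e F') = kpF (D.contractArc e) F' + 1 := by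
  push_neg at hcov
  have hfacts : ∀ f ∈ F', (D.ends f).1 ≠ (D.ends e).1 ∧ (D.ends f).2 ≠ (D.ends e).2 :=
    fun f hf => ((mem_contract_A hne).1 (hF' hf)).2
  have htnv : ∀ f ∈ F', (D.ends f).1 ≠ (D.ends e).2 := fun f hf => (hcov f hf).1
  have hhnu : ∀ f ∈ F', (D.ends f).2 ≠ (D.ends e).1 := fun f hf => (hcov f hf).2
  rw [kpF_eq_card, kpF_eq_card]
  have hins : ((insert e F').image (fun a => (D.ends a).1)).filter
        (fun w => ((insert e F').filter (fun a => (D.ends a).2 = w)).card = 0) =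
      insert (D.ends e).1 ((F'.image (fun a => ((D.contractArc e).ends a).1)).filter
        (fun w => (F'.filter (fun a => ((D.contractArc e).ends a).2 = w)).card = 0)) := by
    apply Finset.ext
    intro w
    rw [Finset.mem_insert, mem_kpSet, mem_kpSet]
    constructor
    · rintro ⟨⟨a, ha, hta⟩, hheads⟩
      by_cases hwu : w = (D.ends e).1
      · exact Or.inl hwu
      · right
        rcases Finset.mem_insert.1 ha with rfl | haF'
        · exact absurd hta.symm hwu
        constructor
        · refine ⟨a, haF', ?_⟩
          rw [contract_ends_eval hne]
          simp only
          rw [if_neg (htnv a haF')]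
          exact hta
        · intro f hf
          rw [contract_ends_eval hne]
          simp only
          rw [if_neg (hfacts f hf).2]
          exact hheads f (Finset.mem_insert_of_mem hf)
    · rintro (rfl | ⟨⟨f, hf, htf⟩, hheads⟩)
      · refine ⟨⟨e, Finset.mem_insert_self e F', rfl⟩, ?_⟩
        intro a ha
        rcases Finset.mem_insert.1 ha with rfl | haF'
        · exact fun h => hne h.symm
        · exact hhnu a haF'
      · rw [contract_ends_eval hne] at htf
        simp only at htf
        rw [if_neg (htnv f hf)] at htf
        have hwv : w ≠ (D.ends e).2 := htf ▸ htnv f hf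
        constructor
        · exact ⟨f, Finset.mem_insert_of_mem hf, htf⟩
        · intro a ha
          rcases Finset.mem_insert.1 ha with rfl | haF'
          · exact fun h => hwv h.symm
          · have := hheads a haF'
            rw [contract_ends_eval hne] at this
            simp only at this
            rwa [if_neg (hfacts a haF').2] at this
  rw [hins, Finset.card_insert_of_notMem, add_comm]
  rw [mem_kpSet]
  rintro ⟨⟨f, hf, htf⟩, -⟩
  rw [contract_ends_eval hne] at htf
  simp only at htf
  rw [if_neg (htnv f hf)] at htf
  exact (hfacts f hf).1 htf

end KP

end MDigraph
namespace MDigraph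

section Extract

variable {D : MDigraph} {e : ℕ} {F F' : Finset ℕ}

lemma mem_extract_A {f : ℕ} :
    f ∈ (D.extractArc e).A ↔ f ∈ D.A ∧ (D.ends f).1 ≠ (D.ends e).1 ∧
      (D.ends f).1 ≠ (D.ends e).2 ∧ (D.ends f).2 ≠ (D.ends e).1 ∧
      (D.ends f).2 ≠ (D.ends e).2 := by
  simp [extractArc, Finset.mem_filter, and_assoc]

lemma contract_ends_agree (hne : (D.ends e).1 ≠ (D.ends e).2) {f : ℕ}
    (h1 : (D.ends f).1 ≠ (D.ends e).2) (h2 : (D.ends f).2 ≠ (D.ends e).2) :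
    (D.contractArc e).ends f = D.ends f := by
  rw [contract_ends_eval hne, if_neg h1, if_neg h2]

lemma uncov_iff (hne : (D.ends e).1 ≠ (D.ends e).2) :
    (F' ⊆ (D.contractArc e).A ∧ (DegOK (D.contractArc e) F' ∧ kcF (D.contractArc e) F' = 0) ∧
      ¬ ∃ f ∈ F', (D.ends f).1 = (D.ends e).2 ∨ (D.ends f).2 = (D.ends e).1)
    ↔ (F' ⊆ (D.extractArc e).A ∧ DegOK (D.extractArc e) F' ∧ kcF (D.extractArc e) F' = 0) := by
  constructor
  · rintro ⟨hsub, ⟨hdeg, hkc⟩, hcov⟩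
    push_neg at hcov
    have hsub2 : F' ⊆ (D.extractArc e).A := fun f hf => by
      obtain ⟨hA, h1, h2⟩ := (mem_contract_A hne).1 (hsub hf)
      exact mem_extract_A.2 ⟨hA, h1, (hcov f hf).1, (hcov f hf).2, h2⟩
    have hagree : ∀ f ∈ F', (D.contractArc e).ends f = (D.extractArc e).ends f := by
      intro f hf
      exact contract_ends_agree hne (hcov f hf).1 (((mem_contract_A hne).1 (hsub hf)).2.2)
    refine ⟨hsub2, (DegOK_congr hagree).1 hdeg, ?_⟩
    rw [← kcF_congr hagree hsub hsub2]
    exact hkc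
  · rintro ⟨hsub, hdeg, hkc⟩
    have hsub2 : F' ⊆ (D.contractArc e).A := fun f hf => by
      obtain ⟨hA, h1, h2, h3, h4⟩ := mem_extract_A.1 (hsub hf)
      exact (mem_contract_A hne).2 ⟨hA, h1, h4⟩
    have hagree : ∀ f ∈ F', (D.contractArc e).ends f = (D.extractArc e).ends f := by
      intro f hf
      obtain ⟨hA, h1, h2, h3, h4⟩ := mem_extract_A.1 (hsub hf)
      exact contract_ends_agree hne h2 h4
    refine ⟨hsub2, ⟨(DegOK_congr hagree).2 hdeg, ?_⟩, ?_⟩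
    · rw [kcF_congr hagree hsub2 hsub]
      exact hkc
    · rintro ⟨f, hf, hc | hc⟩
      · exact (mem_extract_A.1 (hsub hf)).2.2.1 hc
      · exact (mem_extract_A.1 (hsub hf)).2.2.2.1 hc

lemma loop_kcF_ne_zero (hloop : D.IsLoop e) (hFA : F ⊆ D.A) (heF : e ∈ F) :
    kcF D F ≠ 0 := by
  apply kcF_ne_zero (C := {e}) (Finset.singleton_subset_iff.2 heF)
  refine ⟨le_refl 1, fun _ => (D.ends e).1, fun _ => e, ?_, ?_, ?_, by simp⟩
  · intro i j hi hj _
    omega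
  · intro i j hi hj _
    omega
  · intro i hi
    refine ⟨hFA heF, ?_⟩
    rw [Prod.ext_iff]
    exact ⟨rfl, hloop.symm⟩

end Extract

end MDigraph
/-- for an arc `e` of `D`: if `e` is a loop then
`π̂(D;x,y) = π̂(D_{-e};x,y)`; otherwise
`π̂(D;x,y) = π̂(D_{-e};x,y) + x·π̂(D_{/e};x,y) + x·(y−1)·π̂(D_{†e};x,y)`. -/
theorem biPathPoly_recurrence (D : MDigraph) (hwf : D.WellFormed)
    (e : ℕ) (he : e ∈ D.A) :
    (D.IsLoop e → D.biPathPoly = (D.delArc e).biPathPoly) ∧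
      (¬ D.IsLoop e → D.biPathPoly = (D.delArc e).biPathPoly +
        MvPolynomial.X 0 * (D.contractArc e).biPathPoly +
        MvPolynomial.X 0 * (MvPolynomial.X 1 - 1) * (D.extractArc e).biPathPoly) := by
  classical
  constructor
  · -- loop case
    intro hloop
    unfold MDigraph.biPathPoly
    have hidx : (D.delArc e).A.powerset.filter
          (fun F => MDigraph.DegOK (D.delArc e) F ∧ MDigraph.kcF (D.delArc e) F = 0)
        = D.A.powerset.filter (fun F => MDigraph.DegOK D F ∧ MDigraph.kcF D F = 0) := by
      apply Finset.ext
      intro F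
      simp only [Finset.mem_filter, Finset.mem_powerset]
      have hAdel : (D.delArc e).A = D.A.erase e := rfl
      constructor
      · rintro ⟨hsub, hdeg, hkc⟩
        rw [hAdel] at hsub
        have hsub' : F ⊆ D.A := hsub.trans (Finset.erase_subset _ _)
        refine ⟨hsub', (MDigraph.DegOK_congr (fun _ _ => rfl)).1 hdeg, ?_⟩
        rw [← MDigraph.kcF_congr (D₁ := D.delArc e) (D₂ := D) (fun _ _ => rfl) hsub hsub']
        exact hkc
      · rintro ⟨hsub, hdeg, hkc⟩
        have heF : e ∉ F := fun heF => MDigraph.loop_kcF_ne_zero hloop hsub heF hkc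
        have hsub' : F ⊆ (D.delArc e).A := by
          rw [hAdel]
          exact Finset.subset_erase.2 ⟨hsub, heF⟩
        refine ⟨hsub', (MDigraph.DegOK_congr (fun _ _ => rfl)).2 hdeg, ?_⟩
        rw [MDigraph.kcF_congr (D₁ := D.delArc e) (D₂ := D) (fun _ _ => rfl) hsub' hsub]
        exact hkc
    rw [hidx]
    apply Finset.sum_congr rfl
    intro F hF
    rw [MDigraph.kpF_congr (D₁ := D) (D₂ := D.delArc e) (fun _ _ => rfl)]
  · -- non-loop case
    intro hloop
    have hne : (D.ends e).1 ≠ (D.ends e).2 := hloop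
    have hsplit := Finset.sum_filter_add_sum_filter_not
      (D.A.powerset.filter (fun F => MDigraph.DegOK D F ∧ MDigraph.kcF D F = 0))
      (fun F => e ∈ F)
      (fun F => (MvPolynomial.X 0 : MvPolynomial (Fin 2) ℝ) ^ F.card *
        MvPolynomial.X 1 ^ MDigraph.kpF D F)
    -- Part A : the arc subsets avoiding e give the deletion term
    have hA : ∑ F ∈ (D.A.powerset.filter
          (fun F => MDigraph.DegOK D F ∧ MDigraph.kcF D F = 0)).filter (fun F => ¬ e ∈ F),
          (MvPolynomial.X 0 : MvPolynomial (Fin 2) ℝ) ^ F.card *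
            MvPolynomial.X 1 ^ MDigraph.kpF D F
        = (D.delArc e).biPathPoly := by
      unfold MDigraph.biPathPoly
      have hidx : (D.A.powerset.filter
            (fun F => MDigraph.DegOK D F ∧ MDigraph.kcF D F = 0)).filter (fun F => ¬ e ∈ F)
          = (D.delArc e).A.powerset.filter
            (fun F => MDigraph.DegOK (D.delArc e) F ∧ MDigraph.kcF (D.delArc e) F = 0) := by
        apply Finset.ext
        intro F
        simp only [Finset.mem_filter, Finset.mem_powerset]
        have hAdel : (D.delArc e).A = D.A.erase e := rfl
        constructor
        · rintro ⟨⟨hsub, hdeg, hkc⟩, heF⟩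
          have hsub' : F ⊆ (D.delArc e).A := by
            rw [hAdel]; exact Finset.subset_erase.2 ⟨hsub, heF⟩
          refine ⟨hsub', (MDigraph.DegOK_congr (fun _ _ => rfl)).2 hdeg, ?_⟩
          rw [MDigraph.kcF_congr (D₁ := D.delArc e) (D₂ := D) (fun _ _ => rfl) hsub' hsub]
          exact hkc
        · rintro ⟨hsub, hdeg, hkc⟩
          have hsub0 : F ⊆ D.A.erase e := hAdel ▸ hsub
          have hsub' : F ⊆ D.A := hsub0.trans (Finset.erase_subset _ _)
          have heF : e ∉ F := fun hc => (Finset.mem_erase.1 (hsub0 hc)).1 rfl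
          refine ⟨⟨hsub', (MDigraph.DegOK_congr (fun _ _ => rfl)).1 hdeg, ?_⟩, heF⟩
          rw [← MDigraph.kcF_congr (D₁ := D.delArc e) (D₂ := D) (fun _ _ => rfl) hsub hsub']
          exact hkc
      rw [hidx]
      apply Finset.sum_congr rfl
      intro F hF
      rw [MDigraph.kpF_congr (D₁ := D) (D₂ := D.delArc e) (fun _ _ => rfl)]
    -- Part B : the arc subsets containing e
    have hB : ∑ F ∈ (D.A.powerset.filter
          (fun F => MDigraph.DegOK D F ∧ MDigraph.kcF D F = 0)).filter (fun F => e ∈ F),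
          (MvPolynomial.X 0 : MvPolynomial (Fin 2) ℝ) ^ F.card *
            MvPolynomial.X 1 ^ MDigraph.kpF D F
        = MvPolynomial.X 0 * (D.contractArc e).biPathPoly +
          MvPolynomial.X 0 * (MvPolynomial.X 1 - 1) * (D.extractArc e).biPathPoly := by
      have hbij : ∑ F ∈ (D.A.powerset.filter
            (fun F => MDigraph.DegOK D F ∧ MDigraph.kcF D F = 0)).filter (fun F => e ∈ F),
            (MvPolynomial.X 0 : MvPolynomial (Fin 2) ℝ) ^ F.card *
              MvPolynomial.X 1 ^ MDigraph.kpF D F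
          = ∑ F' ∈ (D.contractArc e).A.powerset.filter
              (fun F' => MDigraph.DegOK (D.contractArc e) F' ∧
                MDigraph.kcF (D.contractArc e) F' = 0),
            (MvPolynomial.X 0 : MvPolynomial (Fin 2) ℝ) ^ (F'.card + 1) *
              MvPolynomial.X 1 ^ (MDigraph.kpF (D.contractArc e) F' +
                (if ∃ f ∈ F', (D.ends f).1 = (D.ends e).2 ∨ (D.ends f).2 = (D.ends e).1
                  then 0 else 1)) := by
        refine Finset.sum_bij' (fun F _ => F.erase e) (fun F' _ => insert e F')
          ?_ ?_ ?_ ?_ ?_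
        · -- hi
          intro F hF
          simp only [Finset.mem_filter, Finset.mem_powerset] at hF ⊢
          obtain ⟨⟨hsub, hdeg, hkc⟩, heF⟩ := hF
          exact ⟨MDigraph.erase_subset_contract hne hsub heF hdeg,
            MDigraph.degOK_contract_erase hne hsub heF hdeg,
            MDigraph.kcF_contract_erase hne hsub heF hdeg hkc⟩
        · -- hj
          intro F' hF'
          simp only [Finset.mem_filter, Finset.mem_powerset] at hF' ⊢
          obtain ⟨hsub, hdeg, hkc⟩ := hF'
          exact ⟨⟨MDigraph.insert_subset_A he hsub hne,
            MDigraph.degOK_insert hne hsub hdeg,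
            MDigraph.kcF_insert he hne hsub hkc⟩, Finset.mem_insert_self e F'⟩
        · -- left inverse
          intro F hF
          simp only [Finset.mem_filter] at hF
          exact Finset.insert_erase hF.2
        · -- right inverse
          intro F' hF'
          simp only [Finset.mem_filter, Finset.mem_powerset] at hF'
          exact Finset.erase_insert
            (fun hc => MDigraph.e_notMem_contract hne (hF'.1 hc))
        · -- terms agree
          intro F hF
          simp only [Finset.mem_filter, Finset.mem_powerset] at hF
          obtain ⟨⟨hsub, hdeg, hkc⟩, heF⟩ := hF
          have hcard : (F.erase e).card + 1 = F.card := Finset.card_erase_add_one heF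
          have hsub' : F.erase e ⊆ (D.contractArc e).A :=
            MDigraph.erase_subset_contract hne hsub heF hdeg
          have hkp : MDigraph.kpF D F = MDigraph.kpF (D.contractArc e) (F.erase e) +
              (if ∃ f ∈ F.erase e, (D.ends f).1 = (D.ends e).2 ∨ (D.ends f).2 = (D.ends e).1
                then 0 else 1) := by
            by_cases hcov : ∃ f ∈ F.erase e,
                (D.ends f).1 = (D.ends e).2 ∨ (D.ends f).2 = (D.ends e).1
            · rw [if_pos hcov, add_zero]
              conv_lhs => rw [← Finset.insert_erase heF]
              exact MDigraph.kp_insert_cov hne hsub' hcov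
            · rw [if_neg hcov]
              conv_lhs => rw [← Finset.insert_erase heF]
              exact MDigraph.kp_insert_uncov hne hsub' hcov
          rw [hcard, hkp]
      rw [hbij]
      rw [← Finset.sum_filter_add_sum_filter_not ((D.contractArc e).A.powerset.filter
            (fun F' => MDigraph.DegOK (D.contractArc e) F' ∧
              MDigraph.kcF (D.contractArc e) F' = 0))
          (fun F' => ∃ f ∈ F', (D.ends f).1 = (D.ends e).2 ∨ (D.ends f).2 = (D.ends e).1)]
      have hcovsum : ∀ F' ∈ ((D.contractArc e).A.powerset.filter
            (fun F' => MDigraph.DegOK (D.contractArc e) F' ∧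
              MDigraph.kcF (D.contractArc e) F' = 0)).filter
            (fun F' => ∃ f ∈ F', (D.ends f).1 = (D.ends e).2 ∨ (D.ends f).2 = (D.ends e).1),
          (MvPolynomial.X 0 : MvPolynomial (Fin 2) ℝ) ^ (F'.card + 1) *
              MvPolynomial.X 1 ^ (MDigraph.kpF (D.contractArc e) F' +
                (if ∃ f ∈ F', (D.ends f).1 = (D.ends e).2 ∨ (D.ends f).2 = (D.ends e).1
                  then 0 else 1))
            = MvPolynomial.X 0 * ((MvPolynomial.X 0 : MvPolynomial (Fin 2) ℝ) ^ F'.card *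
                MvPolynomial.X 1 ^ MDigraph.kpF (D.contractArc e) F') := by
        intro F' hF'
        rw [Finset.mem_filter] at hF'
        rw [if_pos hF'.2, add_zero, pow_succ]
        ring
      have huncovsum : ∀ F' ∈ ((D.contractArc e).A.powerset.filter
            (fun F' => MDigraph.DegOK (D.contractArc e) F' ∧
              MDigraph.kcF (D.contractArc e) F' = 0)).filter
            (fun F' => ¬ ∃ f ∈ F',
              (D.ends f).1 = (D.ends e).2 ∨ (D.ends f).2 = (D.ends e).1),
          (MvPolynomial.X 0 : MvPolynomial (Fin 2) ℝ) ^ (F'.card + 1) *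
              MvPolynomial.X 1 ^ (MDigraph.kpF (D.contractArc e) F' +
                (if ∃ f ∈ F', (D.ends f).1 = (D.ends e).2 ∨ (D.ends f).2 = (D.ends e).1
                  then 0 else 1))
            = MvPolynomial.X 0 * MvPolynomial.X 1 *
                ((MvPolynomial.X 0 : MvPolynomial (Fin 2) ℝ) ^ F'.card *
                MvPolynomial.X 1 ^ MDigraph.kpF (D.contractArc e) F') := by
        intro F' hF'
        rw [Finset.mem_filter] at hF'
        rw [if_neg hF'.2, pow_succ, pow_succ]
        ring
      rw [Finset.sum_congr rfl hcovsum, Finset.sum_congr rfl huncovsum]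
      rw [← Finset.mul_sum, ← Finset.mul_sum]
      -- rewrite the uncovered sum as the extraction polynomial
      have hextidx : ((D.contractArc e).A.powerset.filter
            (fun F' => MDigraph.DegOK (D.contractArc e) F' ∧
              MDigraph.kcF (D.contractArc e) F' = 0)).filter
            (fun F' => ¬ ∃ f ∈ F',
              (D.ends f).1 = (D.ends e).2 ∨ (D.ends f).2 = (D.ends e).1)
          = (D.extractArc e).A.powerset.filter
            (fun F' => MDigraph.DegOK (D.extractArc e) F' ∧
              MDigraph.kcF (D.extractArc e) F' = 0) := by
        apply Finset.ext
        intro F'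
        simp only [Finset.mem_filter, Finset.mem_powerset]
        constructor
        · rintro ⟨⟨hsub, hdeg, hkc⟩, hcov⟩
          exact (MDigraph.uncov_iff hne).1 ⟨hsub, ⟨hdeg, hkc⟩, hcov⟩
        · intro h
          obtain ⟨hsub, ⟨hdeg, hkc⟩, hcov⟩ := (MDigraph.uncov_iff hne).2 h
          exact ⟨⟨hsub, hdeg, hkc⟩, hcov⟩
      have hext : ∑ F' ∈ ((D.contractArc e).A.powerset.filter
            (fun F' => MDigraph.DegOK (D.contractArc e) F' ∧
              MDigraph.kcF (D.contractArc e) F' = 0)).filter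
            (fun F' => ¬ ∃ f ∈ F',
              (D.ends f).1 = (D.ends e).2 ∨ (D.ends f).2 = (D.ends e).1),
          (MvPolynomial.X 0 : MvPolynomial (Fin 2) ℝ) ^ F'.card *
            MvPolynomial.X 1 ^ MDigraph.kpF (D.contractArc e) F'
          = (D.extractArc e).biPathPoly := by
        unfold MDigraph.biPathPoly
        rw [← hextidx]
        apply Finset.sum_congr rfl
        intro F' hF'
        rw [Finset.mem_filter, Finset.mem_filter, Finset.mem_powerset] at hF'
        obtain ⟨⟨hsub, hdeg, hkc⟩, hcov⟩ := hF'
        push_neg at hcov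
        have hagree : ∀ f ∈ F', (D.contractArc e).ends f = (D.extractArc e).ends f := by
          intro f hf
          exact MDigraph.contract_ends_agree hne (hcov f hf).1
            (((MDigraph.mem_contract_A hne).1 (hsub hf)).2.2)
        rw [MDigraph.kpF_congr hagree]
      have hconsplit : (D.contractArc e).biPathPoly
          = (∑ F' ∈ ((D.contractArc e).A.powerset.filter
              (fun F' => MDigraph.DegOK (D.contractArc e) F' ∧
                MDigraph.kcF (D.contractArc e) F' = 0)).filter
              (fun F' => ∃ f ∈ F',
                (D.ends f).1 = (D.ends e).2 ∨ (D.ends f).2 = (D.ends e).1),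
            (MvPolynomial.X 0 : MvPolynomial (Fin 2) ℝ) ^ F'.card *
              MvPolynomial.X 1 ^ MDigraph.kpF (D.contractArc e) F')
          + ∑ F' ∈ ((D.contractArc e).A.powerset.filter
              (fun F' => MDigraph.DegOK (D.contractArc e) F' ∧
                MDigraph.kcF (D.contractArc e) F' = 0)).filter
              (fun F' => ¬ ∃ f ∈ F',
                (D.ends f).1 = (D.ends e).2 ∨ (D.ends f).2 = (D.ends e).1),
            (MvPolynomial.X 0 : MvPolynomial (Fin 2) ℝ) ^ F'.card *
              MvPolynomial.X 1 ^ MDigraph.kpF (D.contractArc e) F' := by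
        unfold MDigraph.biPathPoly
        rw [Finset.sum_filter_add_sum_filter_not]
      rw [hext, hconsplit, hext]
      ring
    calc D.biPathPoly
        = ∑ F ∈ (D.A.powerset.filter
            (fun F => MDigraph.DegOK D F ∧ MDigraph.kcF D F = 0)).filter (fun F => e ∈ F),
            (MvPolynomial.X 0 : MvPolynomial (Fin 2) ℝ) ^ F.card *
              MvPolynomial.X 1 ^ MDigraph.kpF D F
          + ∑ F ∈ (D.A.powerset.filter
            (fun F => MDigraph.DegOK D F ∧ MDigraph.kcF D F = 0)).filter (fun F => ¬ e ∈ F),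
            (MvPolynomial.X 0 : MvPolynomial (Fin 2) ℝ) ^ F.card *
              MvPolynomial.X 1 ^ MDigraph.kpF D F := by
          unfold MDigraph.biPathPoly
          rw [hsplit]
      _ = (D.delArc e).biPathPoly + MvPolynomial.X 0 * (D.contractArc e).biPathPoly +
          MvPolynomial.X 0 * (MvPolynomial.X 1 - 1) * (D.extractArc e).biPathPoly := by
          rw [hA, hB]
          ring
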